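/- Let α_1, α_2, α_3 ∈ [0,1/2]. There exist g_1, g_2, g_3 ∈ SU(2) with g_i ∈ C_{α_i} for i = 1,2,3 and g_1 g_2 g_3 = 1 if and only if |α_1 − α_2| ≤ α_3 and α_3 ≤ min(α_1 + α_2, 1 − α_1 − α_2). -/

import Mathlib

noncomputable section

open Matrix Complex Real

/-- 2×2 complex matrices. -/
abbrev M2 : Type := Matrix (Fin 2) (Fin 2) ℂ

/-- The special unitary group SU(2), as a subgroup of the unitary group. -/
def SU2 : Subgroup (Matrix.unitaryGroup (Fin 2) ℂ) where
  carrier := { g | Matrix.det (g : M2) = 1 }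
  one_mem' := by simp
  mul_mem' := by
    intro a b ha hb
    simp only [Set.mem_setOf_eq, Matrix.UnitaryGroup.mul_val, Matrix.det_mul] at *
    rw [ha, hb, mul_one]
  inv_mem' := by
    intro a ha
    simp only [Set.mem_setOf_eq, Matrix.UnitaryGroup.inv_val] at *
    show Matrix.det (star (a : M2)) = 1
    have : star (a : M2) = (a : M2)ᴴ := rfl
    rw [this, Matrix.det_conjTranspose, ha, star_one]

/-- The underlying matrix of an element of SU(2). -/
def mat (g : SU2) : M2 := ((g : Matrix.unitaryGroup (Fin 2) ℂ) : M2)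

@[simp] lemma mat_one : mat (1 : SU2) = 1 := rfl
@[simp] lemma mat_mul (g h : SU2) : mat (g * h) = mat g * mat h := rfl
@[simp] lemma mat_inv (g : SU2) : mat g⁻¹ = star (mat g) := rfl

/-- The diagonal matrix `exp(α x₀) = diag(e^{2πiα}, e^{-2πiα})`. -/
def expD (α : ℝ) : M2 :=
  Matrix.diagonal ![Complex.exp (2 * Real.pi * α * Complex.I),
                    Complex.exp (-(2 * Real.pi * α * Complex.I))]

lemma expD_mem (α : ℝ) : expD α ∈ Matrix.unitaryGroup (Fin 2) ℂ := by
  rw [Matrix.mem_unitaryGroup_iff]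
  show expD α * (expD α)ᴴ = 1
  rw [expD, Matrix.diagonal_conjTranspose, Matrix.diagonal_mul_diagonal]
  have h : (fun i => ![Complex.exp (2 * Real.pi * α * Complex.I),
      Complex.exp (-(2 * Real.pi * α * Complex.I))] i *
      star ![Complex.exp (2 * Real.pi * α * Complex.I),
      Complex.exp (-(2 * Real.pi * α * Complex.I))] i) = (1 : Fin 2 → ℂ) := by
    funext i
    fin_cases i <;>
      simp [Pi.star_apply, Complex.star_def, ← Complex.exp_conj,
        ← Complex.exp_add, Complex.conj_I, Complex.conj_ofReal] <;>
      simp [map_ofNat]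
  rw [h]
  exact Matrix.diagonal_one

lemma expD_det (α : ℝ) : (expD α).det = 1 := by
  rw [expD, Matrix.det_diagonal]
  rw [show (Finset.univ : Finset (Fin 2)) = {0, 1} from rfl]
  rw [Finset.prod_insert (by simp), Finset.prod_singleton]
  simp [← Complex.exp_add]

/-- `exp(α x₀)` as an element of SU(2). -/
def diagSU2 (α : ℝ) : SU2 := ⟨⟨expD α, expD_mem α⟩, expD_det α⟩

/-- The conjugacy class `C_α ⊂ SU(2)` of `exp(α x₀)`. -/
def Cα (α : ℝ) : Set SU2 := { g | ∃ u : SU2, u * diagSU2 α * u⁻¹ = g }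

namespace PoP

/-- shorthand for `exp(2πiα)` -/
def E (α : ℝ) : ℂ := Complex.exp (2 * Real.pi * α * Complex.I)

lemma E_eq (α : ℝ) : E α = Complex.exp ((2 * Real.pi * α : ℝ) * Complex.I) := by
  rw [E]; push_cast; ring_nf

lemma E_mul (α β : ℝ) : E α * E β = E (α + β) := by
  rw [E, E, E, ← Complex.exp_add]; push_cast; ring_nf

lemma E_mul_E_neg (α : ℝ) : E α * E (-α) = 1 := by
  rw [E_mul, add_neg_cancel, E]; simp

lemma star_E (α : ℝ) : star (E α) = E (-α) := by
  rw [E, E, Complex.star_def, ← Complex.exp_conj]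
  push_cast
  simp only [_root_.map_mul, Complex.conj_I, Complex.conj_ofReal, _root_.map_ofNat]
  ring_nf

lemma E_add_E_neg (α : ℝ) : E α + E (-α) = ((2 * Real.cos (2 * Real.pi * α) : ℝ) : ℂ) := by
  rw [E_eq, E_eq, show ((2 * Real.pi * (-α) : ℝ) : ℂ) = ((-(2 * Real.pi * α) : ℝ) : ℂ) by
    push_cast; ring]
  rw [Complex.exp_mul_I, Complex.exp_mul_I]
  push_cast
  simp [Real.cos_neg, Real.sin_neg]
  ring

lemma expD_eq (α : ℝ) : expD α = !![E α, 0; 0, E (-α)] := by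
  have h : E (-α) = Complex.exp (-(2 * Real.pi * α * Complex.I)) := by
    rw [E]; push_cast; ring_nf
  rw [expD, E, h]
  ext i j
  fin_cases i <;> fin_cases j <;> simp [Matrix.diagonal]

end PoP
namespace PoP

lemma mat_injective : Function.Injective mat := fun g h e => by
  apply Subtype.ext; apply Subtype.ext; exact e

lemma mat_diagSU2 (α : ℝ) : mat (diagSU2 α) = expD α := rfl

lemma star_mat_mul_self (g : SU2) : star (mat g) * mat g = 1 := by
  have : mat g⁻¹ * mat g = 1 := by rw [← mat_mul, inv_mul_cancel, mat_one]
  rwa [mat_inv] at this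

lemma mat_mul_star_self (g : SU2) : mat g * star (mat g) = 1 := by
  have : mat g * mat g⁻¹ = 1 := by rw [← mat_mul, mul_inv_cancel, mat_one]
  rwa [mat_inv] at this

lemma su2_det (g : SU2) : Matrix.det (mat g) = 1 := g.2

lemma su2_star_eq (g : SU2) :
    star (mat g) = !![mat g 1 1, -(mat g 0 1); -(mat g 1 0), mat g 0 0] := by
  have h2 : star (mat g) = (mat g)⁻¹ := (Matrix.inv_eq_left_inv (star_mat_mul_self g)).symm
  rw [h2, Matrix.inv_def, su2_det g]
  rw [Matrix.adjugate_fin_two]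
  simp

lemma su2_e11 (g : SU2) : mat g 1 1 = star (mat g 0 0) := by
  have := congrFun (congrFun (su2_star_eq g) 0) 0
  simp [Matrix.conjTranspose_apply] at this
  rw [← this]; rfl

lemma su2_e10 (g : SU2) : mat g 1 0 = -star (mat g 0 1) := by
  have h1 := congrFun (congrFun (su2_star_eq g) 0) 1
  simp [Matrix.conjTranspose_apply] at h1
  have h2 : mat g 0 1 = -(starRingEnd ℂ) (mat g 1 0) := by linear_combination h1
  rw [h2]
  simp [Complex.star_def]

lemma su2_norm (g : SU2) :
    mat g 0 0 * star (mat g 0 0) + mat g 0 1 * star (mat g 0 1) = 1 := by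
  have hd := su2_det g
  rw [Matrix.det_fin_two, su2_e11 g, su2_e10 g] at hd
  linear_combination hd

lemma mat_eq (g : SU2) :
    mat g = !![mat g 0 0, mat g 0 1; -star (mat g 0 1), star (mat g 0 0)] := by
  ext i j
  fin_cases i <;> fin_cases j <;>
    simp [su2_e10 g, su2_e11 g]

/-- build an element of SU(2) from its first row -/
def mkSU2 (a b : ℂ) (h : a * (starRingEnd ℂ) a + b * (starRingEnd ℂ) b = 1) : SU2 :=
  ⟨⟨!![a, b; -(starRingEnd ℂ) b, (starRingEnd ℂ) a], by
      rw [Matrix.mem_unitaryGroup_iff]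
      show _ * Matrix.conjTranspose _ = _
      rw [Matrix.eta_fin_two (Matrix.conjTranspose _)]
      simp only [Matrix.conjTranspose_apply, Matrix.cons_val_zero, Matrix.cons_val_one,
        Matrix.head_cons, Matrix.head_fin_const, Matrix.cons_val', Matrix.empty_val',
        Matrix.cons_val_fin_one, map_neg, Complex.conj_conj, Matrix.of_apply]
      rw [Matrix.mul_fin_two, Matrix.one_fin_two]
      ext i j
      fin_cases i <;> fin_cases j <;> simp
      exacts [h, by ring, by ring, by linear_combination h]⟩, by
    show Matrix.det _ = 1
    rw [Matrix.det_fin_two_of]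
    linear_combination h⟩

@[simp] lemma mat_mkSU2 (a b : ℂ) (h : a * (starRingEnd ℂ) a + b * (starRingEnd ℂ) b = 1) :
    mat (mkSU2 a b h) = !![a, b; -(starRingEnd ℂ) b, (starRingEnd ℂ) a] := rfl

lemma mem_Cα_iff (g : SU2) (α : ℝ) :
    g ∈ Cα α ↔ ∃ u : SU2, mat u * expD α = mat g * mat u := by
  constructor
  · rintro ⟨u, rfl⟩
    refine ⟨u, ?_⟩
    have : u * diagSU2 α = (u * diagSU2 α * u⁻¹) * u := by group
    calc mat u * expD α = mat (u * diagSU2 α) := rfl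
      _ = mat ((u * diagSU2 α * u⁻¹) * u) := by rw [← this]
      _ = mat (u * diagSU2 α * u⁻¹) * mat u := rfl
  · rintro ⟨u, hu⟩
    refine ⟨u, ?_⟩
    have : u * diagSU2 α = g * u := mat_injective (by rw [mat_mul, mat_mul, ← mat_diagSU2, mat_diagSU2] at *; exact hu)
    rw [this]; group

end PoP
namespace PoP

lemma star_mat_eq (w : SU2) :
    star (mat w) = !![(starRingEnd ℂ) (mat w 0 0), -(mat w 0 1);
                      (starRingEnd ℂ) (mat w 0 1), mat w 0 0] := by
  rw [su2_star_eq w, su2_e11 w, su2_e10 w]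
  simp [Complex.star_def]

lemma trace_formula' (α β : ℝ) (w : SU2) :
    Matrix.trace (expD α * (mat w * (expD β * star (mat w)))) =
      ((Complex.normSq (mat w 0 0) : ℂ)) * (E (α + β) + E (-(α + β))) +
      ((Complex.normSq (mat w 0 1) : ℂ)) * (E (α - β) + E (-(α - β))) := by
  set a := mat w 0 0 with ha
  set b := mat w 0 1 with hb
  have hW : mat w = !![a, b; -(starRingEnd ℂ) b, (starRingEnd ℂ) a] := by
    rw [mat_eq w]; simp [Complex.star_def, ← ha, ← hb]
  have h1 : E (α + β) = E α * E β := (E_mul _ _).symm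
  have h2 : E (-(α + β)) = E (-α) * E (-β) := by
    rw [E_mul, show -α + -β = -(α + β) by ring]
  have h3 : E (α - β) = E α * E (-β) := by rw [E_mul, sub_eq_add_neg]
  have h4 : E (-(α - β)) = E (-α) * E β := by
    rw [E_mul, show -α + β = -(α - β) by ring]
  have hna : ((Complex.normSq a : ℂ)) = a * (starRingEnd ℂ) a := (Complex.mul_conj a).symm
  have hnb : ((Complex.normSq b : ℂ)) = b * (starRingEnd ℂ) b := (Complex.mul_conj b).symm
  rw [star_mat_eq w, hW, expD_eq α, expD_eq β, h1, h2, h3, h4, hna, hnb]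
  simp [Matrix.trace_fin_two, Matrix.mul_apply, Fin.sum_univ_two]
  ring

lemma trace_formula (α β : ℝ) (w : SU2) :
    Matrix.trace (expD α * (mat w * (expD β * star (mat w)))) =
      ((Complex.normSq (mat w 0 0) * (2 * Real.cos (2 * Real.pi * (α + β))) +
        Complex.normSq (mat w 0 1) * (2 * Real.cos (2 * Real.pi * (α - β))) : ℝ) : ℂ) := by
  rw [trace_formula', E_add_E_neg, E_add_E_neg]
  push_cast
  ring

lemma normSq_add_one (w : SU2) :
    Complex.normSq (mat w 0 0) + Complex.normSq (mat w 0 1) = 1 := by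
  have h := su2_norm w
  rw [show star (mat w 0 0) = (starRingEnd ℂ) (mat w 0 0) from rfl,
    show star (mat w 0 1) = (starRingEnd ℂ) (mat w 0 1) from rfl,
    Complex.mul_conj, Complex.mul_conj] at h
  exact_mod_cast h

lemma trace_conj (u x : SU2) :
    Matrix.trace (mat (u * x * u⁻¹)) = Matrix.trace (mat x) := by
  rw [mat_mul, mat_mul, Matrix.trace_mul_comm, ← Matrix.mul_assoc, mat_inv,
    star_mat_mul_self u, Matrix.one_mul]

lemma trace_diagSU2 (α : ℝ) :
    Matrix.trace (mat (diagSU2 α)) = ((2 * Real.cos (2 * Real.pi * α) : ℝ) : ℂ) := by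
  rw [mat_diagSU2, expD_eq, Matrix.trace_fin_two]
  simp [E_add_E_neg]

lemma trace_of_mem_Cα {g : SU2} {α : ℝ} (h : g ∈ Cα α) :
    Matrix.trace (mat g) = ((2 * Real.cos (2 * Real.pi * α) : ℝ) : ℂ) := by
  obtain ⟨u, rfl⟩ := h
  rw [trace_conj, trace_diagSU2]

lemma trace_inv (g : SU2) : Matrix.trace (mat g⁻¹) = star (Matrix.trace (mat g)) := by
  rw [mat_inv]
  exact (Matrix.trace_conjTranspose (mat g)).symm ▸ rfl

end PoP
namespace PoP

lemma mat_eq' (g : SU2) :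
    mat g = !![mat g 0 0, mat g 0 1;
               -(starRingEnd ℂ) (mat g 0 1), (starRingEnd ℂ) (mat g 0 0)] := by
  rw [mat_eq g]; simp [Complex.star_def]

lemma su2_norm' (g : SU2) :
    mat g 0 0 * (starRingEnd ℂ) (mat g 0 0) + mat g 0 1 * (starRingEnd ℂ) (mat g 0 1) = 1 := by
  have := su2_norm g
  simpa [Complex.star_def] using this

lemma trace_eq (g : SU2) :
    Matrix.trace (mat g) = mat g 0 0 + (starRingEnd ℂ) (mat g 0 0) := by
  rw [Matrix.trace_fin_two, su2_e11 g]; simp [Complex.star_def]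

lemma E_re (α : ℝ) : (E α).re = Real.cos (2 * Real.pi * α) := by
  rw [E_eq, Complex.exp_ofReal_mul_I_re]

lemma E_im (α : ℝ) : (E α).im = Real.sin (2 * Real.pi * α) := by
  rw [E_eq, Complex.exp_ofReal_mul_I_im]

lemma conj_E (α : ℝ) : (starRingEnd ℂ) (E α) = E (-α) := star_E α

lemma mem_Cα_of_trace (g : SU2) {α : ℝ} (h0 : 0 ≤ α) (h1 : α ≤ 1/2)
    (ht : Matrix.trace (mat g) = ((2 * Real.cos (2 * Real.pi * α) : ℝ) : ℂ)) :
    g ∈ Cα α := by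
  have hφ0 : 0 ≤ 2 * Real.pi * α := by positivity
  have hφπ : 2 * Real.pi * α ≤ Real.pi := by nlinarith [Real.pi_pos]
  have hsin : 0 ≤ Real.sin (2 * Real.pi * α) :=
    Real.sin_nonneg_of_nonneg_of_le_pi hφ0 hφπ
  set a := mat g 0 0 with ha
  set b := mat g 0 1 with hb
  have htr : a + (starRingEnd ℂ) a = E α + E (-α) := by
    rw [← trace_eq g, ht, ← E_add_E_neg]
  have hnorm : a * (starRingEnd ℂ) a + b * (starRingEnd ℂ) b = 1 := su2_norm' g
  have hEE : E α * E (-α) = 1 := E_mul_E_neg α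
  by_cases hb0 : b = 0
  · -- diagonal case
    have hre : a.re = Real.cos (2 * Real.pi * α) := by
      have h' := htr
      rw [Complex.add_conj, E_add_E_neg] at h'
      have := Complex.ofReal_inj.mp h'
      linarith
    have hnsq : Complex.normSq a = 1 := by
      rw [hb0] at hnorm
      simp only [map_zero, mul_zero, add_zero, Complex.mul_conj] at hnorm
      exact_mod_cast hnorm
    have him2 : (a.im - Real.sin (2 * Real.pi * α)) * (a.im + Real.sin (2 * Real.pi * α)) = 0 := by
      have h2 := Real.sin_sq_add_cos_sq (2 * Real.pi * α)
      rw [Complex.normSq_apply] at hnsq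
      linear_combination hnsq - h2 - (a.re + Real.cos (2 * Real.pi * α)) * hre
    rcases le_or_gt 0 a.im with him | him
    · -- a = E α
      have haE : a = E α := by
        apply Complex.ext
        · rw [E_re]; exact hre
        · rw [E_im]
          rcases mul_eq_zero.mp him2 with h | h
          · linarith
          · linarith
      refine ⟨1, mat_injective ?_⟩
      have : (1 : SU2) * diagSU2 α * 1⁻¹ = diagSU2 α := by group
      rw [this, mat_diagSU2, expD_eq, mat_eq' g, ← ha, ← hb, hb0, haE, conj_E]
      simp
    · -- a = E (-α)
      have haE : a = E (-α) := by
        apply Complex.ext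
        · rw [E_re]; simpa using hre
        · rw [E_im]
          have : Real.sin (2 * Real.pi * (-α)) = -Real.sin (2 * Real.pi * α) := by
            rw [show 2 * Real.pi * (-α) = -(2 * Real.pi * α) by ring, Real.sin_neg]
          rw [this]
          rcases mul_eq_zero.mp him2 with h | h
          · linarith
          · linarith
      have hcond : (0 : ℂ) * (starRingEnd ℂ) 0 + 1 * (starRingEnd ℂ) 1 = 1 := by simp
      rw [mem_Cα_iff]
      refine ⟨mkSU2 0 1 hcond, ?_⟩
      rw [mat_mkSU2, expD_eq, mat_eq' g, ← ha, ← hb, hb0, haE, conj_E]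
      ext i j
      fin_cases i <;> fin_cases j <;>
        simp [Matrix.mul_apply, Fin.sum_univ_two]
  · -- off-diagonal case: genuine diagonalization
    set e : ℂ := E α - a with he
    have hce : (starRingEnd ℂ) e = E (-α) - (starRingEnd ℂ) a := by
      rw [he, map_sub, conj_E]
    set n : ℝ := Real.sqrt (Complex.normSq b + Complex.normSq e) with hn
    have hbpos : 0 < Complex.normSq b := Complex.normSq_pos.mpr hb0
    have hsum : 0 < Complex.normSq b + Complex.normSq e :=
      add_pos_of_pos_of_nonneg hbpos (Complex.normSq_nonneg e)
    have hnpos : 0 < n := Real.sqrt_pos.mpr hsum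
    have hne : ((n : ℝ) : ℂ) ≠ 0 := by exact_mod_cast hnpos.ne'
    have hn2 : ((n : ℝ) : ℂ) * ((n : ℝ) : ℂ) = (Complex.normSq b : ℂ) + (Complex.normSq e : ℂ) := by
      rw [← Complex.ofReal_mul, hn, Real.mul_self_sqrt hsum.le, Complex.ofReal_add]
    have hcond : (b / n) * (starRingEnd ℂ) (b / n) +
        (-(starRingEnd ℂ) e / n) * (starRingEnd ℂ) (-(starRingEnd ℂ) e / n) = 1 := by
      have hc1 : (starRingEnd ℂ) (b / (n:ℝ)) = (starRingEnd ℂ) b / (n:ℝ) := by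
        rw [map_div₀, Complex.conj_ofReal]
      have hc2 : (starRingEnd ℂ) (-(starRingEnd ℂ) e / (n:ℝ)) = -e / (n:ℝ) := by
        rw [map_div₀, Complex.conj_ofReal, map_neg, Complex.conj_conj]
      rw [hc1, hc2]
      field_simp
      linear_combination Complex.mul_conj b + Complex.mul_conj e - hn2
    rw [mem_Cα_iff]
    refine ⟨mkSU2 (b / n) (-(starRingEnd ℂ) e / n) hcond, ?_⟩
    rw [mat_mkSU2, expD_eq, mat_eq' g, ← ha, ← hb]
    ext i j
    fin_cases i <;> fin_cases j <;>
      simp [Matrix.mul_apply, Fin.sum_univ_two, map_div₀, Complex.conj_ofReal]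
    · field_simp
      linear_combination (-b) * he
    · field_simp
      linear_combination ((a - E (-α)) * hce + E (-α) * htr - hnorm + hEE)
    · field_simp
      linear_combination ((E α - (starRingEnd ℂ) a) * he + hnorm - E α * htr - hEE)
    · field_simp
      linear_combination (-(starRingEnd ℂ) b) * hce

end PoP
namespace PoP

lemma two_pi_mem {x : ℝ} (h0 : 0 ≤ x) (h1 : x ≤ 1/2) :
    2 * Real.pi * x ∈ Set.Icc 0 Real.pi := by
  constructor
  · positivity
  · nlinarith [Real.pi_pos]

lemma cos_le_cos_iff {x y : ℝ} (hx : x ∈ Set.Icc 0 (1/2)) (hy : y ∈ Set.Icc 0 (1/2)) :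
    Real.cos (2 * Real.pi * x) ≤ Real.cos (2 * Real.pi * y) ↔ y ≤ x := by
  rw [Real.strictAntiOn_cos.le_iff_ge (two_pi_mem hx.1 hx.2) (two_pi_mem hy.1 hy.2)]
  constructor
  · intro h
    have := Real.pi_pos
    nlinarith
  · intro h
    have := Real.pi_pos
    nlinarith

lemma cos_sub_eq (α₁ α₂ : ℝ) :
    Real.cos (2 * Real.pi * (α₁ - α₂)) = Real.cos (2 * Real.pi * |α₁ - α₂|) := by
  rcases abs_cases (α₁ - α₂) with ⟨h, _⟩ | ⟨h, _⟩
  · rw [h]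
  · rw [h, show 2 * Real.pi * -(α₁ - α₂) = -(2 * Real.pi * (α₁ - α₂)) by ring, Real.cos_neg]

lemma cos_sum_eq (α₁ α₂ : ℝ) :
    Real.cos (2 * Real.pi * (α₁ + α₂)) =
      Real.cos (2 * Real.pi * min (α₁ + α₂) (1 - α₁ - α₂)) := by
  rcases min_cases (α₁ + α₂) (1 - α₁ - α₂) with ⟨h, _⟩ | ⟨h, _⟩
  · rw [h]
  · rw [h, show 2 * Real.pi * (1 - α₁ - α₂) = 2 * Real.pi - 2 * Real.pi * (α₁ + α₂) by ring,
      Real.cos_two_pi_sub]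

lemma ineq_iff {α₁ α₂ α₃ : ℝ} (h₁ : α₁ ∈ Set.Icc (0:ℝ) (1/2))
    (h₂ : α₂ ∈ Set.Icc (0:ℝ) (1/2)) (h₃ : α₃ ∈ Set.Icc (0:ℝ) (1/2)) :
    (Real.cos (2 * Real.pi * (α₁ + α₂)) ≤ Real.cos (2 * Real.pi * α₃) ∧
      Real.cos (2 * Real.pi * α₃) ≤ Real.cos (2 * Real.pi * (α₁ - α₂))) ↔
    (|α₁ - α₂| ≤ α₃ ∧ α₃ ≤ min (α₁ + α₂) (1 - α₁ - α₂)) := by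
  have habs : |α₁ - α₂| ∈ Set.Icc (0:ℝ) (1/2) := by
    constructor
    · exact abs_nonneg _
    · rcases abs_cases (α₁ - α₂) with ⟨h, _⟩ | ⟨h, _⟩ <;> rw [h] <;>
        [linarith [h₁.2, h₂.1]; linarith [h₂.2, h₁.1]]
  have hmin : min (α₁ + α₂) (1 - α₁ - α₂) ∈ Set.Icc (0:ℝ) (1/2) := by
    constructor
    · rcases min_cases (α₁ + α₂) (1 - α₁ - α₂) with ⟨h, _⟩ | ⟨h, _⟩ <;> rw [h] <;>
        [linarith [h₁.1, h₂.1]; linarith [h₁.2, h₂.2]]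
    · rcases min_cases (α₁ + α₂) (1 - α₁ - α₂) with ⟨h, h'⟩ | ⟨h, h'⟩ <;> rw [h] <;> linarith
  rw [cos_sub_eq, cos_sum_eq, cos_le_cos_iff hmin h₃, cos_le_cos_iff h₃ habs, and_comm]

end PoP
open PoP
/-- the pair-of-pants inequality for triples in SU(2) conjugacy
classes with product one. -/
theorem stmt_6 (α₁ α₂ α₃ : ℝ) (h₁ : α₁ ∈ Set.Icc (0:ℝ) (1/2))
    (h₂ : α₂ ∈ Set.Icc (0:ℝ) (1/2)) (h₃ : α₃ ∈ Set.Icc (0:ℝ) (1/2)) :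
    (∃ g₁ g₂ g₃ : SU2, g₁ ∈ Cα α₁ ∧ g₂ ∈ Cα α₂ ∧ g₃ ∈ Cα α₃ ∧ g₁ * g₂ * g₃ = 1) ↔
      |α₁ - α₂| ≤ α₃ ∧ α₃ ≤ min (α₁ + α₂) (1 - α₁ - α₂) := by
  constructor
  · rintro ⟨g₁, g₂, g₃, m1, m2, m3, hp⟩
    rw [← ineq_iff h₁ h₂ h₃]
    obtain ⟨u, hu⟩ := m1
    obtain ⟨v, hv⟩ := m2
    set w := u⁻¹ * v with hw
    have hgg : g₁ * g₂ = u * (diagSU2 α₁ * (w * (diagSU2 α₂ * w⁻¹))) * u⁻¹ := by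
      rw [← hu, ← hv, hw]; group
    have ht1 : Matrix.trace (mat (g₁ * g₂)) =
        ((Complex.normSq (mat w 0 0) * (2 * Real.cos (2 * Real.pi * (α₁ + α₂))) +
          Complex.normSq (mat w 0 1) * (2 * Real.cos (2 * Real.pi * (α₁ - α₂))) : ℝ) : ℂ) := by
      rw [hgg, trace_conj, ← trace_formula α₁ α₂ w]
      simp only [mat_mul, mat_inv, mat_diagSU2, mul_assoc]
    have hinv : g₁ * g₂ = g₃⁻¹ := eq_inv_of_mul_eq_one_left hp
    have ht2 : Matrix.trace (mat (g₁ * g₂)) = ((2 * Real.cos (2 * Real.pi * α₃) : ℝ) : ℂ) := by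
      rw [hinv, trace_inv, trace_of_mem_Cα m3, Complex.star_def, Complex.conj_ofReal]
    rw [ht1] at ht2
    have heq := Complex.ofReal_inj.mp ht2
    have hsum := normSq_add_one w
    have hs0 := Complex.normSq_nonneg (mat w 0 0)
    have ht0 := Complex.normSq_nonneg (mat w 0 1)
    have hcc : Real.cos (2 * Real.pi * (α₁ + α₂)) ≤ Real.cos (2 * Real.pi * (α₁ - α₂)) := by
      have e1 : Real.cos (2 * Real.pi * (α₁ - α₂)) - Real.cos (2 * Real.pi * (α₁ + α₂))
          = 2 * Real.sin (2 * Real.pi * α₁) * Real.sin (2 * Real.pi * α₂) := by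
        rw [show 2 * Real.pi * (α₁ - α₂) = 2 * Real.pi * α₁ - 2 * Real.pi * α₂ by ring,
          show 2 * Real.pi * (α₁ + α₂) = 2 * Real.pi * α₁ + 2 * Real.pi * α₂ by ring,
          Real.cos_sub, Real.cos_add]
        ring
      have s1 : 0 ≤ Real.sin (2 * Real.pi * α₁) :=
        Real.sin_nonneg_of_nonneg_of_le_pi (two_pi_mem h₁.1 h₁.2).1 (two_pi_mem h₁.1 h₁.2).2
      have s2 : 0 ≤ Real.sin (2 * Real.pi * α₂) :=
        Real.sin_nonneg_of_nonneg_of_le_pi (two_pi_mem h₂.1 h₂.2).1 (two_pi_mem h₂.1 h₂.2).2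
      nlinarith
    have k1 : 2 * Real.cos (2 * Real.pi * α₃) - 2 * Real.cos (2 * Real.pi * (α₁ + α₂)) =
        2 * (Complex.normSq (mat w 0 1) *
          (Real.cos (2 * Real.pi * (α₁ - α₂)) - Real.cos (2 * Real.pi * (α₁ + α₂)))) := by
      linear_combination -heq + 2 * Real.cos (2 * Real.pi * (α₁ + α₂)) * hsum
    have k2 : 2 * Real.cos (2 * Real.pi * (α₁ - α₂)) - 2 * Real.cos (2 * Real.pi * α₃) =
        2 * (Complex.normSq (mat w 0 0) *
          (Real.cos (2 * Real.pi * (α₁ - α₂)) - Real.cos (2 * Real.pi * (α₁ + α₂)))) := by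
      linear_combination heq - 2 * Real.cos (2 * Real.pi * (α₁ - α₂)) * hsum
    constructor
    · linarith [mul_nonneg ht0 (sub_nonneg.mpr hcc)]
    · linarith [mul_nonneg hs0 (sub_nonneg.mpr hcc)]
  · rintro ⟨hL, hR⟩
    obtain ⟨hc1, hc2⟩ := (ineq_iff h₁ h₂ h₃).mpr ⟨hL, hR⟩
    obtain ⟨s, hs0, hs1, hseq⟩ : ∃ s : ℝ, 0 ≤ s ∧ s ≤ 1 ∧
        s * (2 * Real.cos (2 * Real.pi * (α₁ + α₂))) +
          (1 - s) * (2 * Real.cos (2 * Real.pi * (α₁ - α₂)))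
          = 2 * Real.cos (2 * Real.pi * α₃) := by
      rcases eq_or_lt_of_le (le_trans hc1 hc2) with he | hlt
      · exact ⟨0, le_refl 0, zero_le_one, by rw [← he] at hc2 ⊢; linarith⟩
      · refine ⟨(Real.cos (2 * Real.pi * (α₁ - α₂)) - Real.cos (2 * Real.pi * α₃)) /
            (Real.cos (2 * Real.pi * (α₁ - α₂)) - Real.cos (2 * Real.pi * (α₁ + α₂))),
          div_nonneg (by linarith) (by linarith), (div_le_one (by linarith)).mpr (by linarith), ?_⟩
        have hd : Real.cos (2 * Real.pi * (α₁ - α₂)) - Real.cos (2 * Real.pi * (α₁ + α₂)) ≠ 0 :=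
          sub_ne_zero.mpr (ne_of_gt hlt)
        field_simp
        ring
    have hw : ((Real.sqrt s : ℝ) : ℂ) * (starRingEnd ℂ) ((Real.sqrt s : ℝ) : ℂ) +
        ((Real.sqrt (1 - s) : ℝ) : ℂ) * (starRingEnd ℂ) ((Real.sqrt (1 - s) : ℝ) : ℂ) = 1 := by
      rw [Complex.conj_ofReal, Complex.conj_ofReal, ← Complex.ofReal_mul, ← Complex.ofReal_mul,
        Real.mul_self_sqrt hs0, Real.mul_self_sqrt (by linarith), ← Complex.ofReal_add]
      norm_num
    set w : SU2 := mkSU2 _ _ hw with hwdef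
    refine ⟨diagSU2 α₁, w * diagSU2 α₂ * w⁻¹, (diagSU2 α₁ * (w * diagSU2 α₂ * w⁻¹))⁻¹,
      ⟨1, by group⟩, ⟨w, rfl⟩, ?_, by group⟩
    apply mem_Cα_of_trace _ h₃.1 h₃.2
    rw [trace_inv]
    have hm : mat (diagSU2 α₁ * (w * diagSU2 α₂ * w⁻¹)) =
        expD α₁ * (mat w * (expD α₂ * star (mat w))) := by
      simp [mat_diagSU2, mul_assoc]
    rw [hm, trace_formula, Complex.star_def, Complex.conj_ofReal]
    have e00 : mat w 0 0 = ((Real.sqrt s : ℝ) : ℂ) := by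
      rw [hwdef, mat_mkSU2]; simp
    have e01 : mat w 0 1 = ((Real.sqrt (1 - s) : ℝ) : ℂ) := by
      rw [hwdef, mat_mkSU2]; simp
    rw [e00, e01, Complex.normSq_ofReal, Complex.normSq_ofReal,
      Real.mul_self_sqrt hs0, Real.mul_self_sqrt (by linarith : (0:ℝ) ≤ 1 - s)]
    exact_mod_cast hseq
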